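/- For integers a, b, k with k ≥ b > a ≥ 1 and m ≥ 1: Σ_{λ ∈ BD'_{a,b,k}(m)} u^{ℓ_a(λ)} v^{ℓ_b(λ)} q^{|λ|} = Σ_{h=0}^{m} u^{h} v^{m−h} q^{k·C(m,2) + k·C(h,2) + mb + (a−b)h} [m choose h]_k. -/

import Mathlib

/-- The finite q-Pochhammer symbol `(t;q)_n = ∏_{i=0}^{n-1} (1 - t qⁱ)`. -/
noncomputable def qPoch (t q : ℂ) (n : ℕ) : ℂ := ∏ i ∈ Finset.range n, (1 - t * q ^ i)

/-- The infinite q-Pochhammer symbol `(t;q)_∞ = ∏_{i≥0} (1 - t qⁱ)`. -/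
noncomputable def qPochInf (t q : ℂ) : ℂ := ∏' i : ℕ, (1 - t * q ^ i)

/-- The Gaussian binomial coefficient `[A choose B]` in base `q`:
`(q;q)_A / ((q;q)_B (q;q)_{A-B})` for `A ≥ B ≥ 0`, and `0` otherwise. -/
noncomputable def gbinom (q : ℂ) (A B : ℕ) : ℂ :=
  if B ≤ A then qPoch q q A / (qPoch q q B * qPoch q q (A - B)) else 0

/-- `lcount k c l` is the number of parts of `l` congruent to `c` modulo `k`. -/
def lcount (k c : ℕ) (l : List ℕ) : ℕ := (l.filter (fun x => x % k = c % k)).length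

/-- Membership in `BD'_{a,b,k}(m)`: partitions `(λ_1,…,λ_m)` with exactly `m` parts, each
`≡ a` or `b (mod k)`, `λ_m ∈ {a, b}`, and for consecutive parts:
`λ_i - λ_{i+1} ≥ k` with strict inequality if `λ_i ≡ a (mod k)`, and
`λ_i - λ_{i+1} ≤ 2k` with strict inequality if `λ_{i+1} ≡ b (mod k)`. -/
def memBD' (a b k m : ℕ) (l : List ℕ) : Prop :=
  l.Pairwise (· ≥ ·) ∧ l.length = m ∧
    (∀ x ∈ l, 0 < x ∧ (x % k = a % k ∨ x % k = b % k)) ∧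
    (l.getLast? = some a ∨ l.getLast? = some b) ∧
    l.Chain' (fun x y => (y + k ≤ x ∧ (x % k = a % k → y + k < x)) ∧
      (x ≤ y + 2 * k ∧ (y % k = b % k → x < y + 2 * k)))

/-- Recursive Gaussian binomial. -/
noncomputable def G (Q : ℂ) : ℕ → ℕ → ℂ
  | 0, 0 => 1
  | 0, _+1 => 0
  | _+1, 0 => 1
  | n+1, h+1 => G Q n (h+1) + Q ^ (n - h) * G Q n h

lemma G_eq_zero (Q : ℂ) : ∀ n h, n < h → G Q n h = 0 := by
  intro n
  induction n with
  | zero => intro h hh; match h, hh with | h+1, _ => rfl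
  | succ n ih =>
    intro h hh
    match h, hh with
    | h+1, hh =>
      rw [G, ih _ (by omega), ih _ (by omega)]
      ring

lemma qPoch_succ (t q : ℂ) (n : ℕ) : qPoch t q (n+1) = qPoch t q n * (1 - t * q ^ n) :=
  Finset.prod_range_succ _ _

lemma qPoch_ne_zero {Q : ℂ} (hQ : ∀ i, 1 ≤ i → 1 - Q ^ i ≠ 0) (n : ℕ) :
    qPoch Q Q n ≠ 0 := by
  unfold qPoch
  apply Finset.prod_ne_zero_iff.2
  intro i _
  have := hQ (i+1) (by omega)
  rwa [pow_succ'] at this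

lemma gbinom_eq_G {Q : ℂ} (hQ : ∀ i, 1 ≤ i → 1 - Q ^ i ≠ 0) :
    ∀ n h, gbinom Q n h = G Q n h := by
  intro n
  induction n with
  | zero =>
    intro h
    match h with
    | 0 => simp [gbinom, G, qPoch]
    | h+1 => simp [gbinom, G]
  | succ n ih =>
    intro h
    match h with
    | 0 =>
      simp only [gbinom, if_pos (Nat.zero_le _), G]
      rw [show qPoch Q Q 0 = 1 from rfl, Nat.sub_zero, one_mul, div_self (qPoch_ne_zero hQ _)]
    | h+1 =>
      rw [G, ← ih, ← ih]
      by_cases hle : h + 1 ≤ n + 1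
      · rcases Nat.lt_or_ge h n with hlt | hge
        · -- h + 1 ≤ n
          have h1 : h + 1 ≤ n := hlt
          rw [gbinom, gbinom, gbinom, if_pos hle, if_pos h1, if_pos (Nat.le_of_succ_le h1)]
          have e1 : n + 1 - (h + 1) = n - h := by omega
          have e2 : n - (h + 1) = n - h - 1 := by omega
          rw [e1, e2]
          have hnh : 1 ≤ n - h := by omega
          have p1 : qPoch Q Q (n+1) = qPoch Q Q n * (1 - Q * Q ^ n) := qPoch_succ _ _ _
          have p2 : qPoch Q Q (h+1) = qPoch Q Q h * (1 - Q * Q ^ h) := qPoch_succ _ _ _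
          have p3 : qPoch Q Q (n - h) = qPoch Q Q (n - h - 1) * (1 - Q * Q ^ (n - h - 1)) := by
            rw [show n - h = (n - h - 1) + 1 by omega]
            exact qPoch_succ _ _ _
          have hz : (1 : ℂ) - Q * Q ^ h ≠ 0 := by
            have := hQ (h+1) (by omega); rwa [pow_succ'] at this
          have hy : (1 : ℂ) - Q * Q ^ (n - h - 1) ≠ 0 := by
            have := hQ (n - h) hnh
            rw [show n - h = (n - h - 1) + 1 by omega, pow_succ'] at this
            exact this
          have e4 : Q ^ (n - h) = Q * Q ^ (n - h - 1) := by
            rw [← pow_succ']; congr 1; omega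
          have e5 : Q * Q ^ n = (Q * Q ^ h) * (Q * Q ^ (n - h - 1)) := by
            rw [← pow_succ', ← pow_succ', ← pow_succ', ← pow_add]; congr 1; omega
          have nz1 := qPoch_ne_zero hQ n
          have nz4 := qPoch_ne_zero hQ h
          have nz5 := qPoch_ne_zero hQ (n - h - 1)
          rw [p1, p2, p3, e4, e5]
          field_simp
          ring
        · -- h = n
          have : h = n := by omega
          subst this
          rw [gbinom, gbinom, gbinom, if_pos hle, if_neg (by omega), if_pos le_rfl]
          simp only [Nat.sub_self, pow_zero, one_mul, zero_add]
          rw [show qPoch Q Q 0 = 1 from rfl, mul_one, div_self (qPoch_ne_zero hQ _)]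
          rw [mul_one, div_self (qPoch_ne_zero hQ _)]
      · rw [gbinom, gbinom, gbinom, if_neg hle, if_neg (by omega), if_neg (by omega)]
        ring

lemma sum_powersetCard_range (Q : ℂ) :
    ∀ m h, ∑ S ∈ Finset.powersetCard h (Finset.range m), Q ^ (∑ x ∈ S, x)
      = Q ^ Nat.choose h 2 * G Q m h := by
  intro m
  induction m with
  | zero =>
    intro h
    match h with
    | 0 => simp [G]
    | h+1 =>
      rw [Finset.powersetCard_eq_empty.2 (by simp), G_eq_zero Q 0 (h+1) (by omega)]
      simp
  | succ m ih =>
    intro h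
    match h with
    | 0 => simp [G]
    | h+1 =>
      rw [Finset.range_add_one, Finset.powersetCard_succ_insert Finset.notMem_range_self]
      rw [Finset.sum_union]
      · rw [Finset.sum_image]
        · have step : ∀ S ∈ Finset.powersetCard h (Finset.range m),
              Q ^ (∑ x ∈ insert m S, x) = Q ^ m * Q ^ (∑ x ∈ S, x) := by
            intro S hS
            have hS' := (Finset.mem_powersetCard.1 hS).1
            have hm : m ∉ S := fun hc => Finset.notMem_range_self (hS' hc)
            rw [Finset.sum_insert hm, pow_add]
          rw [Finset.sum_congr rfl step, ← Finset.mul_sum, ih, ih]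
          by_cases hhm : h ≤ m
          · rw [G]
            have e1 : Nat.choose (h+1) 2 = Nat.choose h 2 + h := by
              rw [Nat.choose_succ_succ h 1, Nat.choose_one_right]
              have : Nat.choose h (Nat.succ 1) = Nat.choose h 2 := rfl
              omega
            rw [mul_add, e1]
            congr 1
            rw [← mul_assoc, ← mul_assoc, ← pow_add, ← pow_add]
            congr 2
            omega
          · rw [G_eq_zero Q m h (by omega), G_eq_zero Q m (h+1) (by omega),
              G_eq_zero Q (m+1) (h+1) (by omega)]
            ring
        · intro S hS T hT hST
          have hmS : m ∉ S := fun hc =>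
            Finset.notMem_range_self ((Finset.mem_powersetCard.1 hS).1 hc)
          have hmT : m ∉ T := fun hc =>
            Finset.notMem_range_self ((Finset.mem_powersetCard.1 hT).1 hc)
          have := congrArg (fun s => Finset.erase s m) hST
          simpa [Finset.erase_insert hmS, Finset.erase_insert hmT] using this
      · rw [Finset.disjoint_left]
        intro S hS hS'
        obtain ⟨T, hT, rfl⟩ := Finset.mem_image.1 hS'
        have := (Finset.mem_powersetCard.1 hS).1 (Finset.mem_insert_self m T)
        exact Finset.notMem_range_self this

lemma sum_powersetCard_weighted (Q : ℂ) (m h : ℕ) :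
    ∑ S ∈ Finset.powersetCard h (Finset.range m),
        Q ^ (∑ x ∈ S, (if x = 0 then 0 else m - x))
      = Q ^ Nat.choose h 2 * G Q m h := by
  rw [← sum_powersetCard_range Q m h]
  set σ : ℕ → ℕ := fun x => if x = 0 then 0 else m - x with hσ
  have hmem : ∀ x, x ∈ Finset.range m → σ x ∈ Finset.range m := by
    intro x hx
    rw [Finset.mem_range] at hx ⊢
    show (if x = 0 then 0 else m - x) < m
    split <;> omega
  have hinv : ∀ x, x ∈ Finset.range m → σ (σ x) = x := by
    intro x hx
    rw [Finset.mem_range] at hx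
    rcases Nat.eq_zero_or_pos x with h0 | h0
    · simp [hσ, h0]
    · have h1 : σ x = m - x := by
        show (if x = 0 then 0 else m - x) = m - x
        rw [if_neg (by omega)]
      have h2 : σ (m - x) = x := by
        show (if m - x = 0 then 0 else m - (m - x)) = x
        rw [if_neg (by omega)]
        omega
      rw [h1, h2]
  have hinj : ∀ S : Finset ℕ, S ⊆ Finset.range m →
      ∀ x ∈ S, ∀ y ∈ S, σ x = σ y → x = y := by
    intro S hS x hx y hy hxy
    have hx' := Finset.mem_range.1 (hS hx)
    have hy' := Finset.mem_range.1 (hS hy)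
    simp only [hσ] at hxy
    split at hxy <;> split at hxy <;> omega
  have himg : ∀ S : Finset ℕ, S ∈ Finset.powersetCard h (Finset.range m) →
      S.image σ ∈ Finset.powersetCard h (Finset.range m) := by
    intro S hS
    obtain ⟨hsub, hcard⟩ := Finset.mem_powersetCard.1 hS
    refine Finset.mem_powersetCard.2 ⟨?_, ?_⟩
    · intro y hy
      obtain ⟨x, hx, rfl⟩ := Finset.mem_image.1 hy
      exact hmem x (hsub hx)
    · rw [Finset.card_image_of_injOn, hcard]
      intro x hx y hy
      exact hinj S hsub x hx y hy
  have hback : ∀ S : Finset ℕ, S ∈ Finset.powersetCard h (Finset.range m) →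
      (S.image σ).image σ = S := by
    intro S hS
    obtain ⟨hsub, _⟩ := Finset.mem_powersetCard.1 hS
    rw [Finset.image_image]
    have : ∀ x ∈ S, (σ ∘ σ) x = id x := fun x hx => hinv x (hsub hx)
    rw [Finset.image_congr this, Finset.image_id]
  refine Finset.sum_bij' (fun S _ => S.image σ) (fun S _ => S.image σ)
    himg himg hback hback ?_
  intro S hS
  obtain ⟨hsub, _⟩ := Finset.mem_powersetCard.1 hS
  rw [Finset.sum_image (hinj S hsub)]

/-- The part of the partition at bottom-index `ι` given the set `S` of `a`-positions. -/
def bpart (a b k : ℕ) (S : Finset ℕ) (ι : ℕ) : ℕ :=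
  (if ι ∈ S then a else b) + k * ι + k * (S.filter (fun x => 1 ≤ x ∧ x ≤ ι)).card

/-- The partition built from the set `S` of `a`-positions. -/
def buildL (a b k m : ℕ) (S : Finset ℕ) : List ℕ :=
  ((List.range m).map (bpart a b k S)).reverse

section build

variable {a b k : ℕ} (ha : 1 ≤ a) (hab : a < b) (hbk : b ≤ k)

lemma bpart_mod (S : Finset ℕ) (ι : ℕ) :
    bpart a b k S ι % k = (if ι ∈ S then a else b) % k := by
  unfold bpart
  simp [Nat.add_mul_mod_self_left]

include ha hab hbk

lemma amod : a % k = a := Nat.mod_eq_of_lt (by omega)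

lemma bmod_ne : ¬ (b % k = a % k) := by
  rw [amod ha hab hbk]
  rcases Nat.lt_or_ge b k with h | h
  · rw [Nat.mod_eq_of_lt h]; omega
  · have : b = k := by omega
    rw [this, Nat.mod_self]; omega

lemma bpart_mem_iff (S : Finset ℕ) (ι : ℕ) :
    ι ∈ S ↔ bpart a b k S ι % k = a % k := by
  rw [bpart_mod]
  constructor
  · intro h; rw [if_pos h]
  · intro h
    by_contra hc
    rw [if_neg hc] at h
    exact bmod_ne ha hab hbk h

omit ha hab hbk

lemma bfilter_succ (S : Finset ℕ) (ι : ℕ) :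
    (S.filter (fun x => 1 ≤ x ∧ x ≤ ι + 1)).card
      = (S.filter (fun x => 1 ≤ x ∧ x ≤ ι)).card + (if ι + 1 ∈ S then 1 else 0) := by
  have hsplit : S.filter (fun x => 1 ≤ x ∧ x ≤ ι + 1)
      = S.filter (fun x => (1 ≤ x ∧ x ≤ ι) ∨ x = ι + 1) := by
    apply Finset.filter_congr
    intro x _
    constructor
    · intro hx; omega
    · intro hx; omega
  rw [hsplit, Finset.filter_or, Finset.card_union_of_disjoint, Finset.filter_eq']
  · split <;> simp
  · rw [Finset.disjoint_left]
    intro x hx hx'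
    rw [Finset.mem_filter] at hx hx'
    omega

lemma bpart_succ (S : Finset ℕ) (ι : ℕ) :
    bpart a b k S (ι + 1) + (if ι ∈ S then a else b)
      = bpart a b k S ι + k + (if ι + 1 ∈ S then k + a else b) := by
  unfold bpart
  rw [bfilter_succ]
  split <;> split <;> ring_nf <;> omega

include ha hab hbk

lemma memBD'_build {m : ℕ} (hm : 1 ≤ m) (S : Finset ℕ) (hS : S ⊆ Finset.range m) :
    memBD' a b k m (buildL a b k m S) := by
  obtain ⟨n, rfl⟩ : ∃ n, m = n + 1 := ⟨m - 1, by omega⟩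
  set f := bpart a b k S with hf
  have hne := bmod_ne ha hab hbk
  have hchain : (((List.range (n+1)).map f).reverse).Chain'
      (fun x y => (y + k ≤ x ∧ (x % k = a % k → y + k < x)) ∧
        (x ≤ y + 2 * k ∧ (y % k = b % k → x < y + 2 * k))) := by
    rw [List.Chain', List.isChain_reverse, List.isChain_map, List.isChain_range_succ]
    intro ι hι
    show (f ι + k ≤ f (ι+1) ∧ (f (ι+1) % k = a % k → f ι + k < f (ι+1))) ∧
      (f (ι+1) ≤ f ι + 2 * k ∧ (f ι % k = b % k → f (ι+1) < f ι + 2 * k))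
    have hstep := bpart_succ (a := a) (b := b) (k := k) S ι
    have hx := bpart_mod (a := a) (b := b) (k := k) S (ι+1)
    have hy := bpart_mod (a := a) (b := b) (k := k) S ι
    rw [← hf] at hstep hx hy
    by_cases h1 : ι + 1 ∈ S <;> by_cases h0 : ι ∈ S <;>
      simp only [h1, h0, if_pos, if_neg, if_true, if_false] at hstep hx hy <;>
      refine ⟨⟨by omega, fun hh => by omega⟩, by omega, fun hh => by omega⟩
  refine ⟨?_, ?_, ?_, ?_, ?_⟩
  · have h2 : (((List.range (n+1)).map f).reverse).Chain' (fun x y : ℕ => x ≥ y) :=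
      List.IsChain.imp (fun x y h => le_of_add_le_left h.1.1) hchain
    exact List.isChain_iff_pairwise.1 h2
  · simp [buildL]
  · intro x hx
    simp only [buildL, List.mem_reverse, List.mem_map, List.mem_range] at hx
    obtain ⟨ι, hι, rfl⟩ := hx
    constructor
    · have : (if ι ∈ S then a else b) ≥ 1 := by split <;> omega
      unfold bpart
      omega
    · rw [bpart_mod]
      split
      · left; rfl
      · right; rfl
  · rw [buildL, List.getLast?_reverse]
    rw [List.range_succ_eq_map, List.map_cons, List.head?_cons]
    have h0 : f 0 = if 0 ∈ S then a else b := by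
      rw [hf]
      unfold bpart
      have : S.filter (fun x => 1 ≤ x ∧ x ≤ 0) = ∅ := by
        apply Finset.filter_false_of_mem
        intro x _
        omega
      rw [this]
      simp
    rw [hf] at h0
    rw [h0]
    split
    · left; rfl
    · right; rfl
  · exact hchain

end build

lemma list_filter_range_card (p : ℕ → Prop) [DecidablePred p] (m : ℕ) :
    ((List.range m).filter (fun ι => decide (p ι))).length
      = ((Finset.range m).filter p).card := by
  induction m with
  | zero => rfl
  | succ m ih =>
    rw [List.range_succ, List.filter_append, List.length_append, Finset.range_add_one,
      Finset.filter_insert]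
    by_cases hp : p m
    · rw [if_pos hp, Finset.card_insert_of_notMem (by simp)]
      simp [hp, ih]
    · rw [if_neg hp]
      simp [hp, ih]

lemma list_sum_range (f : ℕ → ℕ) (m : ℕ) :
    ((List.range m).map f).sum = ∑ i ∈ Finset.range m, f i := by
  induction m with
  | zero => rfl
  | succ m ih =>
    rw [List.range_succ, List.map_append, List.sum_append, Finset.sum_range_succ, ih]
    simp

section build2

variable {a b k : ℕ} (ha : 1 ≤ a) (hab : a < b) (hbk : b ≤ k)

include ha hab hbk

lemma lcount_build_a {m : ℕ} (S : Finset ℕ) (hS : S ⊆ Finset.range m) :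
    lcount k a (buildL a b k m S) = S.card := by
  unfold lcount buildL
  rw [List.filter_reverse, List.length_reverse, List.filter_map, List.length_map]
  have : ∀ ι ∈ List.range m,
      (fun x => decide (x % k = a % k)) (bpart a b k S ι) = decide (ι ∈ S) := by
    intro ι _
    simp only [decide_eq_decide]
    exact (bpart_mem_iff ha hab hbk S ι).symm
  simp only [Function.comp_def]
  rw [List.filter_congr this, list_filter_range_card (· ∈ S) m]
  congr 1
  rwa [Finset.filter_mem_eq_inter, Finset.inter_eq_right]

lemma lcount_build_b {m : ℕ} (S : Finset ℕ) (hS : S ⊆ Finset.range m) :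
    lcount k b (buildL a b k m S) = m - S.card := by
  unfold lcount buildL
  rw [List.filter_reverse, List.length_reverse, List.filter_map, List.length_map]
  have : ∀ ι ∈ List.range m,
      (fun x => decide (x % k = b % k)) (bpart a b k S ι) = decide (ι ∉ S) := by
    intro ι _
    simp only [decide_eq_decide]
    rw [bpart_mod]
    constructor
    · intro h hc
      rw [if_pos hc] at h
      exact bmod_ne ha hab hbk h.symm
    · intro h
      rw [if_neg h]
  simp only [Function.comp_def]
  rw [List.filter_congr this, list_filter_range_card (· ∉ S) m]
  have : Finset.filter (· ∉ S) (Finset.range m) = Finset.range m \ S := by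
    ext x
    simp [Finset.mem_sdiff]
  rw [this, Finset.card_sdiff_of_subset hS, Finset.card_range]

omit ha hab hbk

lemma sum_build {m : ℕ} (S : Finset ℕ) (hS : S ⊆ Finset.range m) :
    (buildL a b k m S).sum
      = k * Nat.choose m 2 + a * S.card + b * (m - S.card)
        + k * (∑ x ∈ S, (if x = 0 then 0 else m - x)) := by
  unfold buildL bpart
  rw [List.sum_reverse, list_sum_range]
  rw [Finset.sum_add_distrib, Finset.sum_add_distrib]
  have e1 : ∑ ι ∈ Finset.range m, (if ι ∈ S then a else b)
      = a * S.card + b * (m - S.card) := by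
    rw [Finset.sum_ite]
    have h1 : (Finset.range m).filter (fun x => x ∈ S) = S := by
      rw [Finset.filter_mem_eq_inter, Finset.inter_eq_right.2 hS]
    have h2 : (Finset.range m).filter (fun x => ¬ x ∈ S) = Finset.range m \ S := by
      ext x
      simp [Finset.mem_sdiff]
    rw [h1, h2, Finset.sum_const, Finset.sum_const, smul_eq_mul, smul_eq_mul,
      Finset.card_sdiff_of_subset hS, Finset.card_range]
    ring
  have e2 : ∑ ι ∈ Finset.range m, k * ι = k * Nat.choose m 2 := by
    rw [← Finset.mul_sum, Finset.sum_range_id, Nat.choose_two_right]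
  have e3 : ∑ ι ∈ Finset.range m, k * (S.filter (fun x => 1 ≤ x ∧ x ≤ ι)).card
      = k * (∑ x ∈ S, (if x = 0 then 0 else m - x)) := by
    rw [← Finset.mul_sum]
    congr 1
    have hcf : ∀ ι, (S.filter (fun x => 1 ≤ x ∧ x ≤ ι)).card
        = ∑ x ∈ S, (if 1 ≤ x ∧ x ≤ ι then 1 else 0) := by
      intro ι
      rw [Finset.card_eq_sum_ones, Finset.sum_filter]
    rw [Finset.sum_congr rfl (fun ι _ => hcf ι), Finset.sum_comm]
    apply Finset.sum_congr rfl
    intro x hx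
    have hxm : x < m := Finset.mem_range.1 (hS hx)
    by_cases hx1 : 1 ≤ x
    · rw [if_neg (by omega)]
      have : ∑ ι ∈ Finset.range m, (if 1 ≤ x ∧ x ≤ ι then 1 else 0)
          = ((Finset.range m).filter (fun ι => 1 ≤ x ∧ x ≤ ι)).card := by
        rw [Finset.card_eq_sum_ones, Finset.sum_filter]
      rw [this]
      have : (Finset.range m).filter (fun ι => 1 ≤ x ∧ x ≤ ι) = Finset.Ico x m := by
        ext ι
        simp only [Finset.mem_filter, Finset.mem_range, Finset.mem_Ico]
        omega
      rw [this, Nat.card_Ico]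
    · rw [if_pos (by omega)]
      rw [Finset.sum_eq_zero]
      intro ι _
      rw [if_neg (by omega)]
  rw [e1, e2, e3]
  ring

include ha hab hbk

lemma build_inj {m : ℕ} (S T : Finset ℕ) (hS : S ⊆ Finset.range m)
    (hT : T ⊆ Finset.range m) (h : buildL a b k m S = buildL a b k m T) : S = T := by
  unfold buildL at h
  rw [List.reverse_inj, List.map_inj_left] at h
  ext x
  constructor
  · intro hx
    have hxm := hS hx
    have := h x (by simpa [List.mem_range] using Finset.mem_range.1 hxm)
    rw [bpart_mem_iff ha hab hbk S x, this, ← bpart_mem_iff ha hab hbk T x] at hx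
    exact hx
  · intro hx
    have hxm := hT hx
    have := h x (by simpa [List.mem_range] using Finset.mem_range.1 hxm)
    rw [bpart_mem_iff ha hab hbk T x, ← this, ← bpart_mem_iff ha hab hbk S x] at hx
    exact hx

end build2

lemma bpart_zero (a b k : ℕ) (S : Finset ℕ) :
    bpart a b k S 0 = if 0 ∈ S then a else b := by
  unfold bpart
  have : S.filter (fun x => 1 ≤ x ∧ x ≤ 0) = ∅ :=
    Finset.filter_false_of_mem (by intro x _; omega)
  rw [this]
  simp

lemma gap_dvd {k x y r s : ℕ} (hx : x % k = r % k) (hy : y % k = s % k)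
    (hle : y + r ≤ x + s) : ∃ c, x + s = y + r + k * c := by
  have h1 : (x + s) % k = (y + r) % k := by
    rw [Nat.add_mod, Nat.add_mod y r, hx, hy, Nat.add_comm]
  have h2 : k ∣ (x + s) - (y + r) := (Nat.modEq_iff_dvd' hle).1 h1.symm
  obtain ⟨c, hc⟩ := h2
  exact ⟨c, by omega⟩

section build3

variable {a b k : ℕ} (ha : 1 ≤ a) (hab : a < b) (hbk : b ≤ k)

include ha hab hbk

lemma build_surj : ∀ m, 1 ≤ m → ∀ l, memBD' a b k m l →
    ∃ S, S ⊆ Finset.range m ∧ l = buildL a b k m S := by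
  have hne := bmod_ne ha hab hbk
  intro m hm
  induction m, hm using Nat.le_induction with
  | base =>
    intro l hl
    obtain ⟨hsort, hlen, hall, hlast, hchain⟩ := hl
    obtain ⟨x, rfl⟩ := List.length_eq_one_iff.1 hlen
    have hx : some x = some a ∨ some x = some b := by simpa using hlast
    rcases hx with hx | hx
    · refine ⟨{0}, by simp, ?_⟩
      have := Option.some.inj hx
      subst this
      unfold buildL
      rw [show List.range 1 = [0] from rfl]
      simp [bpart_zero]
    · refine ⟨∅, by simp, ?_⟩
      have := Option.some.inj hx
      subst this
      unfold buildL
      rw [show List.range 1 = [0] from rfl]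
      simp [bpart_zero]
  | succ n hn ih =>
    intro l hl
    obtain ⟨p, rfl⟩ : ∃ p, n = p + 1 := ⟨n - 1, by omega⟩
    obtain ⟨hsort, hlen, hall, hlast, hchain⟩ := hl
    match l, hlen with
    | x :: y :: t, hlen =>
      have hlen' : (y :: t).length = p + 1 := by simpa using hlen
      have hl' : memBD' a b k (p+1) (y :: t) := by
        refine ⟨hsort.of_cons, hlen', ?_, ?_, hchain.tail⟩
        · intro z hz
          exact hall z (List.mem_cons_of_mem _ hz)
        · rwa [List.getLast?_cons_cons] at hlast
      obtain ⟨S', hS', heq⟩ := ih _ hl'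
      -- identify y
      have hy : y = bpart a b k S' p := by
        have h1 : (buildL a b k (p+1) S').head? = some (bpart a b k S' p) := by
          unfold buildL
          rw [List.head?_reverse, List.range_succ, List.map_append]
          simp
        rw [← heq] at h1
        simpa using h1
      have hxy := (List.isChain_cons_cons.1 hchain).1
      obtain ⟨⟨hge, hgea⟩, hle2, hle2b⟩ := hxy
      have hxres := (hall x List.mem_cons_self).2
      have hyres : y % k = a % k ↔ p ∈ S' := by
        rw [hy, ← bpart_mem_iff ha hab hbk]
      have hyres' : ¬ p ∈ S' → y % k = b % k := by
        intro hp
        rw [hy, bpart_mod, if_neg hp]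
      have hS'sub : ∀ z ∈ S', z ≤ p := by
        intro z hz
        have := Finset.mem_range.1 (hS' hz)
        omega
      -- linear facts
      have hyE : y = (if p ∈ S' then a else b) + k * p
          + k * (S'.filter (fun z => 1 ≤ z ∧ z ≤ p)).card := hy
      by_cases hres : x % k = a % k
      · -- S = insert (p+1) S'
        refine ⟨insert (p+1) S', ?_, ?_⟩
        · intro z hz
          rcases Finset.mem_insert.1 hz with rfl | hz
          · simp
          · exact Finset.mem_range.2 (by have := Finset.mem_range.1 (hS' hz); omega)
        have hnotmem : (p+1) ∉ S' := fun hc => by have := hS'sub _ hc; omega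
        have hsame : ∀ ι < p + 1, bpart a b k (insert (p+1) S') ι = bpart a b k S' ι := by
          intro ι hι
          unfold bpart
          have hmem' : (if ι ∈ insert (p+1) S' then a else b) = (if ι ∈ S' then a else b) := by
            by_cases hz : ι ∈ S'
            · rw [if_pos (Finset.mem_insert_of_mem hz), if_pos hz]
            · rw [if_neg (fun hc => by
                rcases Finset.mem_insert.1 hc with h | h
                · omega
                · exact hz h), if_neg hz]
          have hfil : (insert (p+1) S').filter (fun z => 1 ≤ z ∧ z ≤ ι)
              = S'.filter (fun z => 1 ≤ z ∧ z ≤ ι) := by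
            rw [Finset.filter_insert, if_neg (by omega)]
          rw [hmem', hfil]
        have hxval : x = bpart a b k (insert (p+1) S') (p+1) := by
          have hcard : ((insert (p+1) S').filter (fun z => 1 ≤ z ∧ z ≤ p+1)).card
              = (S'.filter (fun z => 1 ≤ z ∧ z ≤ p)).card + 1 := by
            rw [Finset.filter_insert, if_pos (by omega)]
            rw [Finset.card_insert_of_notMem (fun hc => hnotmem (Finset.mem_filter.1 hc).1)]
            congr 2
            apply Finset.filter_congr
            intro z hz
            have := hS'sub z hz
            constructor <;> intro <;> omega
          have hBE : bpart a b k (insert (p+1) S') (p+1)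
              = a + k * (p+1) + k * ((S'.filter (fun z => 1 ≤ z ∧ z ≤ p)).card + 1) := by
            unfold bpart
            rw [if_pos (Finset.mem_insert_self _ _), hcard]
          have hkp : k * (p + 1) = k * p + k := by ring
          have hkc : k * ((S'.filter (fun z => 1 ≤ z ∧ z ≤ p)).card + 1)
              = k * (S'.filter (fun z => 1 ≤ z ∧ z ≤ p)).card + k := by ring
          by_cases hp' : p ∈ S'
          · -- x ≡ a, y ≡ a : x = y + 2k
            have hy' : y % k = a % k := hyres.2 hp'
            obtain ⟨c, hc⟩ := gap_dvd (r := a) (s := a) hres hy' (by omega)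
            have hstrict : y + k < x := hgea hres
            have hub : c ≤ 2 := by
              by_contra hcon
              have : k * 3 ≤ k * c := Nat.mul_le_mul le_rfl (by omega)
              omega
            have hlb : 2 ≤ c := by
              by_contra hcon
              have : k * c ≤ k * 1 := Nat.mul_le_mul le_rfl (by omega)
              omega
            have : c = 2 := by omega
            subst this
            rw [if_pos hp'] at hyE
            rw [hBE]
            omega
          · -- x ≡ a, y ≡ b : x + b = y + a + 2k
            have hy' : y % k = b % k := hyres' hp'
            obtain ⟨c, hc⟩ := gap_dvd (r := a) (s := b) hres hy' (by omega)
            have hstrict : y + k < x := hgea hres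
            have hstrict2 : x < y + 2 * k := hle2b hy'
            have hub : c ≤ 2 := by
              by_contra hcon
              have : k * 3 ≤ k * c := Nat.mul_le_mul le_rfl (by omega)
              omega
            have hlb : 2 ≤ c := by
              by_contra hcon
              have : k * c ≤ k * 1 := Nat.mul_le_mul le_rfl (by omega)
              omega
            have : c = 2 := by omega
            subst this
            rw [hBE]
            rw [if_neg hp'] at hyE
            omega
        -- assemble the list
        rw [heq]
        unfold buildL
        rw [List.range_succ (n := p + 1), List.map_append, List.reverse_append]
        rw [List.map_congr_left (fun ι hι => hsame ι (List.mem_range.1 hι))]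
        simp [hxval]
      · -- S = S'
        have hxb : x % k = b % k := by
          rcases hxres with h | h
          · exact absurd h hres
          · exact h
        refine ⟨S', fun z hz => Finset.mem_range.2 (by have := Finset.mem_range.1 (hS' hz); omega), ?_⟩
        have hxval : x = bpart a b k S' (p+1) := by
          have hcard : (S'.filter (fun z => 1 ≤ z ∧ z ≤ p+1)).card
              = (S'.filter (fun z => 1 ≤ z ∧ z ≤ p)).card := by
            congr 1
            apply Finset.filter_congr
            intro z hz
            have := hS'sub z hz
            constructor <;> intro <;> omega
          have hnotmem : (p+1) ∉ S' := fun hc => by have := hS'sub _ hc; omega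
          have hBE : bpart a b k S' (p+1)
              = b + k * (p+1) + k * (S'.filter (fun z => 1 ≤ z ∧ z ≤ p)).card := by
            unfold bpart
            rw [if_neg hnotmem, hcard]
          have hkp : k * (p + 1) = k * p + k := by ring
          by_cases hp' : p ∈ S'
          · -- x ≡ b, y ≡ a : x + a = y + b + k
            have hy' : y % k = a % k := hyres.2 hp'
            obtain ⟨c, hc⟩ := gap_dvd (r := b) (s := a) hxb hy' (by omega)
            have hub : c ≤ 1 := by
              by_contra hcon
              have : k * 2 ≤ k * c := Nat.mul_le_mul le_rfl (by omega)
              omega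
            have hlb : 1 ≤ c := by
              by_contra hcon
              have : k * c = 0 := by
                have : c = 0 := by omega
                simp [this]
              omega
            have : c = 1 := by omega
            subst this
            rw [hBE]
            rw [if_pos hp'] at hyE
            omega
          · -- x ≡ b, y ≡ b : x = y + k
            have hy' : y % k = b % k := hyres' hp'
            obtain ⟨c, hc⟩ := gap_dvd (r := b) (s := b) hxb hy' (by omega)
            have hstrict2 : x < y + 2 * k := hle2b hy'
            have hub : c ≤ 1 := by
              by_contra hcon
              have : k * 2 ≤ k * c := Nat.mul_le_mul le_rfl (by omega)
              omega
            have hlb : 1 ≤ c := by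
              by_contra hcon
              have : k * c = 0 := by
                have : c = 0 := by omega
                simp [this]
              omega
            have : c = 1 := by omega
            subst this
            rw [hBE]
            rw [if_neg hp'] at hyE
            omega
        rw [heq]
        unfold buildL
        rw [List.range_succ (n := p + 1), List.map_append, List.reverse_append]
        simp [hxval]

end build3

/-- Generating function for the partitions in `BD'_{a,b,k}(m)`:
`Σ_{λ ∈ BD'_{a,b,k}(m)} u^{ℓ_a} v^{ℓ_b} q^{|λ|}
  = Σ_{h=0}^{m} u^h v^{m-h} q^{k C(m,2) + k C(h,2) + mb + (a-b)h} [m, h]_k`,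
where the exponent `mb + (a-b)h` is written as `(m-h)b + ha ≥ 0`. -/
theorem gen_BD'_m (a b k m : ℕ) (ha : 1 ≤ a) (hab : a < b) (hbk : b ≤ k)
    (hm : 1 ≤ m) (q u v : ℂ) (hq : ‖q‖ < 1) :
    ∑ᶠ l ∈ {l : List ℕ | memBD' a b k m l},
        u ^ lcount k a l * v ^ lcount k b l * q ^ l.sum
      = ∑ h ∈ Finset.range (m + 1), u ^ h * v ^ (m - h) *
          q ^ (k * Nat.choose m 2 + k * Nat.choose h 2 + (m - h) * b + a * h) *
          gbinom (q ^ k) m h := by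
  have hk : 1 ≤ k := by omega
  have hQ : ∀ i, 1 ≤ i → 1 - (q ^ k) ^ i ≠ 0 := by
    intro i hi hcon
    have h1 : (q ^ k) ^ i = 1 := by
      have := sub_eq_zero.1 hcon
      exact this.symm
    have h2 : ‖q‖ ^ (k * i) = 1 := by
      rw [← pow_mul] at h1
      rw [← norm_pow, h1, norm_one]
    have h3 : ‖q‖ ^ (k * i) ≤ ‖q‖ ^ 1 := by
      apply pow_le_pow_of_le_one (norm_nonneg q) (le_of_lt hq)
      have : 1 ≤ k * i := Nat.one_le_iff_ne_zero.2 (by positivity)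
      omega
    rw [pow_one] at h3
    rw [h2] at h3
    linarith
  have hset : {l : List ℕ | memBD' a b k m l}
      = ↑((Finset.range m).powerset.image (buildL a b k m)) := by
    ext l
    simp only [Set.mem_setOf_eq, Finset.coe_image, Set.mem_image, Finset.mem_coe,
      Finset.mem_powerset]
    constructor
    · intro hl
      obtain ⟨S, hS, heq⟩ := build_surj ha hab hbk m hm l hl
      exact ⟨S, hS, heq.symm⟩
    · rintro ⟨S, hS, rfl⟩
      exact memBD'_build ha hab hbk hm S hS
  rw [hset, finsum_mem_coe_finset]
  rw [Finset.sum_image (fun S hS T hT h => build_inj ha hab hbk S T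
    (Finset.mem_powerset.1 hS) (Finset.mem_powerset.1 hT) h)]
  have hterm : ∀ S ∈ (Finset.range m).powerset,
      u ^ lcount k a (buildL a b k m S) * v ^ lcount k b (buildL a b k m S)
          * q ^ (buildL a b k m S).sum
        = u ^ S.card * v ^ (m - S.card)
          * q ^ (k * Nat.choose m 2 + a * S.card + b * (m - S.card))
          * (q ^ k) ^ (∑ x ∈ S, (if x = 0 then 0 else m - x)) := by
    intro S hS
    have hsub := Finset.mem_powerset.1 hS
    rw [lcount_build_a ha hab hbk S hsub, lcount_build_b ha hab hbk S hsub,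
      sum_build S hsub, pow_add, ← pow_mul]
    ring
  rw [Finset.sum_congr rfl hterm]
  rw [Finset.sum_powerset, Finset.card_range]
  apply Finset.sum_congr rfl
  intro h hh
  have hhm : h ≤ m := by
    have := Finset.mem_range.1 hh
    omega
  have hinner : ∀ S ∈ Finset.powersetCard h (Finset.range m),
      u ^ S.card * v ^ (m - S.card)
          * q ^ (k * Nat.choose m 2 + a * S.card + b * (m - S.card))
          * (q ^ k) ^ (∑ x ∈ S, (if x = 0 then 0 else m - x))
        = u ^ h * v ^ (m - h) * q ^ (k * Nat.choose m 2 + a * h + b * (m - h))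
          * (q ^ k) ^ (∑ x ∈ S, (if x = 0 then 0 else m - x)) := by
    intro S hS
    rw [(Finset.mem_powersetCard.1 hS).2]
  rw [Finset.sum_congr rfl hinner, ← Finset.mul_sum, sum_powersetCard_weighted,
    ← gbinom_eq_G hQ]
  have hexp : q ^ (k * Nat.choose m 2 + a * h + b * (m - h)) * (q ^ k) ^ Nat.choose h 2
      = q ^ (k * Nat.choose m 2 + k * Nat.choose h 2 + (m - h) * b + a * h) := by
    rw [← pow_mul, ← pow_add]
    congr 1
    ring
  rw [mul_assoc (u ^ h * v ^ (m - h)), ← mul_assoc (q ^ _), hexp]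
  ring
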